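/- Under the MIMO continuous-time adaptive law setup, the parameter estimates are uniformly bounded, the normalized estimation error satisfies ∫_0^∞ ‖ε(t)‖²/m(t)² dt < ∞ and sup_{t ≥ 0} ‖ε(t)‖/m(t) < ∞, and the parameter derivatives satisfy sup_{t ≥ 0} ‖dΘ/dt(t)‖ < ∞, sup_{t ≥ 0} ‖dΨ/dt(t)‖ < ∞, ∫_0^∞ ‖dΘ/dt(t)‖² dt < ∞, and ∫_0^∞ ‖dΨ/dt(t)‖² dt < ∞ (i.e. Θ, Ψ ∈ L^∞, ε/m ∈ L² ∩ L^∞, and dΘ/dt, dΨ/dt ∈ L² ∩ L^∞). -/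

import Mathlib

open Matrix BigOperators MeasureTheory

section helpers

lemma dot_cs {n : Type*} [Fintype n] (v w : n → ℝ) : (v ⬝ᵥ w)^2 ≤ (v ⬝ᵥ v) * (w ⬝ᵥ w) := by
  simpa [dotProduct, pow_two, mul_pow] using Finset.sum_mul_sq_le_sq_mul_sq Finset.univ v w

lemma dot_self_nonneg {n : Type*} [Fintype n] (v : n → ℝ) : 0 ≤ v ⬝ᵥ v :=
  Finset.sum_nonneg fun _ _ => mul_self_nonneg _

lemma mulVec_dot_le {n m : Type*} [Fintype n] [Fintype m] (A : Matrix n m ℝ) (v : m → ℝ) :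
    (A *ᵥ v) ⬝ᵥ (A *ᵥ v) ≤ (∑ i, ∑ j, (A i j)^2) * (v ⬝ᵥ v) := by
  have h : ∀ i, (A *ᵥ v) i * (A *ᵥ v) i ≤ (∑ j, (A i j)^2) * (v ⬝ᵥ v) := by
    intro i
    have := Finset.sum_mul_sq_le_sq_mul_sq Finset.univ (A i) v
    simpa [Matrix.mulVec, dotProduct, pow_two] using this
  calc (A *ᵥ v) ⬝ᵥ (A *ᵥ v) = ∑ i, (A *ᵥ v) i * (A *ᵥ v) i := rfl
    _ ≤ ∑ i, (∑ j, (A i j)^2) * (v ⬝ᵥ v) := Finset.sum_le_sum fun i _ => h i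
    _ = (∑ i, ∑ j, (A i j)^2) * (v ⬝ᵥ v) := by rw [Finset.sum_mul]

lemma symm_dot_mulVec {n : Type*} [Fintype n] {S : Matrix n n ℝ} (hS : Sᵀ = S)
    (v w : n → ℝ) : v ⬝ᵥ S *ᵥ w = (S *ᵥ v) ⬝ᵥ w := by
  rw [Matrix.dotProduct_mulVec, ← Matrix.mulVec_transpose, hS]

lemma posdef_symm {n : Type*} [Fintype n] {A : Matrix n n ℝ} (hA : A.PosDef) : Aᵀ = A := by
  have := hA.isHermitian
  rwa [Matrix.IsHermitian, conjTranspose_eq_transpose_of_trivial] at this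

lemma posdef_dot_pos {n : Type*} [Fintype n] {A : Matrix n n ℝ} (hA : A.PosDef)
    {v : n → ℝ} (hv : v ≠ 0) : 0 < v ⬝ᵥ A *ᵥ v := by
  simpa using hA.dotProduct_mulVec_pos hv

lemma posdef_dot_nonneg {n : Type*} [Fintype n] {A : Matrix n n ℝ} (hA : A.PosDef)
    (v : n → ℝ) : 0 ≤ v ⬝ᵥ A *ᵥ v := by
  simpa using hA.posSemidef.dotProduct_mulVec_nonneg v

open scoped MatrixOrder in
lemma posdef_coercive {n : Type*} [Fintype n] [DecidableEq n] [Nonempty n]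
    {A : Matrix n n ℝ} (hA : A.PosDef) :
    ∃ c : ℝ, 0 < c ∧ ∀ v : n → ℝ, c * (v ⬝ᵥ v) ≤ v ⬝ᵥ A *ᵥ v := by
  have hAinv : (A⁻¹).PosDef := hA.inv
  have hs : (A⁻¹).PosSemidef := hAinv.posSemidef
  set S := CFC.sqrt A⁻¹ with hSdef
  have hSS : S * S = A⁻¹ := by rw [← pow_two]; exact CFC.sq_sqrt A⁻¹ hs.nonneg
  have hSsymm : Sᵀ = S := by
    have := (CFC.sqrt_nonneg A⁻¹).posSemidef.isHermitian
    rwa [Matrix.IsHermitian, conjTranspose_eq_transpose_of_trivial] at this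
  have hdet : IsUnit A.det := isUnit_iff_ne_zero.mpr hA.det_pos.ne'
  have hinvA : ∀ v : n → ℝ, A⁻¹ *ᵥ (A *ᵥ v) = v := by
    intro v
    rw [Matrix.mulVec_mulVec, Matrix.nonsing_inv_mul _ hdet, Matrix.one_mulVec]
  have key : ∀ v : n → ℝ, (v ⬝ᵥ v)^2 ≤ (v ⬝ᵥ A⁻¹ *ᵥ v) * (v ⬝ᵥ A *ᵥ v) := by
    intro v
    have h1 : v ⬝ᵥ v = (S *ᵥ v) ⬝ᵥ (S *ᵥ (A *ᵥ v)) := by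
      rw [← symm_dot_mulVec hSsymm, Matrix.mulVec_mulVec, hSS, hinvA]
    have h2 : (S *ᵥ v) ⬝ᵥ (S *ᵥ v) = v ⬝ᵥ A⁻¹ *ᵥ v := by
      rw [← symm_dot_mulVec hSsymm, Matrix.mulVec_mulVec, hSS]
    have h3 : (S *ᵥ (A *ᵥ v)) ⬝ᵥ (S *ᵥ (A *ᵥ v)) = v ⬝ᵥ A *ᵥ v := by
      rw [← symm_dot_mulVec hSsymm, Matrix.mulVec_mulVec, hSS, hinvA, dotProduct_comm]
    calc (v ⬝ᵥ v)^2 = ((S *ᵥ v) ⬝ᵥ (S *ᵥ (A *ᵥ v)))^2 := by rw [h1]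
      _ ≤ ((S *ᵥ v) ⬝ᵥ (S *ᵥ v)) * ((S *ᵥ (A *ᵥ v)) ⬝ᵥ (S *ᵥ (A *ᵥ v))) := dot_cs _ _
      _ = (v ⬝ᵥ A⁻¹ *ᵥ v) * (v ⬝ᵥ A *ᵥ v) := by rw [h2, h3]
  set F : ℝ := ∑ i, ∑ j, (A⁻¹ i j)^2 with hF
  obtain ⟨i⟩ := ‹Nonempty n›
  have hii : 0 < A⁻¹ i i := by
    have h := posdef_dot_pos hAinv (v := Pi.single i 1) (by
      intro h; simpa using congrFun h i)
    simpa [Matrix.mulVec, dotProduct, Pi.single_apply] using h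
  have hFpos : 0 < F := by
    have h5 : (A⁻¹ i i)^2 ≤ ∑ j, (A⁻¹ i j)^2 :=
      Finset.single_le_sum (f := fun j => (A⁻¹ i j)^2) (fun j _ => sq_nonneg _)
        (Finset.mem_univ i)
    have h6 : ∑ j, (A⁻¹ i j)^2 ≤ F :=
      Finset.single_le_sum (f := fun k => ∑ j, (A⁻¹ k j)^2)
        (fun k _ => Finset.sum_nonneg fun j _ => sq_nonneg _) (Finset.mem_univ i)
    nlinarith
  set K := Real.sqrt F with hK
  have hKpos : 0 < K := Real.sqrt_pos.mpr hFpos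
  have hK2 : K^2 = F := Real.sq_sqrt hFpos.le
  have hbound : ∀ v : n → ℝ, v ⬝ᵥ A⁻¹ *ᵥ v ≤ K * (v ⬝ᵥ v) := by
    intro v
    have h1 : (v ⬝ᵥ A⁻¹ *ᵥ v)^2 ≤ F * (v ⬝ᵥ v)^2 := by
      calc (v ⬝ᵥ A⁻¹ *ᵥ v)^2 ≤ (v ⬝ᵥ v) * ((A⁻¹ *ᵥ v) ⬝ᵥ (A⁻¹ *ᵥ v)) := dot_cs _ _
        _ ≤ (v ⬝ᵥ v) * (F * (v ⬝ᵥ v)) := by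
            have := mulVec_dot_le A⁻¹ v
            nlinarith [dot_self_nonneg v]
        _ = F * (v ⬝ᵥ v)^2 := by ring
    have h2 : 0 ≤ v ⬝ᵥ A⁻¹ *ᵥ v := posdef_dot_nonneg hAinv v
    nlinarith [dot_self_nonneg v, mul_nonneg hKpos.le (dot_self_nonneg v),
      sq_nonneg (v ⬝ᵥ A⁻¹ *ᵥ v + K * (v ⬝ᵥ v))]
  refine ⟨K⁻¹, inv_pos.mpr hKpos, fun v => ?_⟩
  have h1 := key v
  have h2 := hbound v
  have h3 := posdef_dot_nonneg hA v
  have h4 := dot_self_nonneg v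
  rw [inv_mul_le_iff₀ hKpos]
  rcases h4.eq_or_lt with h5 | h5
  · calc v ⬝ᵥ v = 0 := h5.symm
      _ ≤ K * (v ⬝ᵥ A *ᵥ v) := mul_nonneg hKpos.le h3
  · have h6 : (v ⬝ᵥ v) * (v ⬝ᵥ v) ≤ (v ⬝ᵥ v) * (K * (v ⬝ᵥ A *ᵥ v)) := by nlinarith
    exact le_of_mul_le_mul_left h6 h5

lemma tripleA {N M : ℕ} (Sp A Kp : Matrix (Fin M) (Fin M) ℝ) (hK : Spᵀ * A = Kp)
    (P : Matrix (Fin N) (Fin M) ℝ) (z : Fin N → ℝ) (e : Fin M → ℝ) (c : ℝ) :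
    ∑ i, ∑ j, ∑ k, (-(c * ((Sp *ᵥ e) j * z i)) * A j k) * P i k
      = -(c * (e ⬝ᵥ (Kp *ᵥ (Pᵀ *ᵥ z)))) := by
  subst hK
  rw [← Matrix.mulVec_mulVec, Matrix.dotProduct_mulVec e Spᵀ, Matrix.vecMul_transpose]
  rw [Finset.sum_comm]
  simp only [dotProduct, Matrix.mulVec, Matrix.transpose_apply, Finset.mul_sum, mul_neg,
    neg_mul, Finset.sum_neg_distrib, neg_neg]
  refine congrArg Neg.neg (Finset.sum_congr rfl fun j _ => ?_)
  rw [Finset.sum_comm]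
  exact Finset.sum_congr rfl fun k _ => Finset.sum_congr rfl fun i _ => by ring

lemma tripleB {M : ℕ} (G B : Matrix (Fin M) (Fin M) ℝ) (h : Gᵀ * B = 1)
    (Q : Matrix (Fin M) (Fin M) ℝ) (x e : Fin M → ℝ) (c : ℝ) :
    ∑ j, ∑ k, ∑ l, (-(c * ((G *ᵥ e) k * x j)) * B k l) * Q l j
      = -(c * (e ⬝ᵥ (Q *ᵥ x))) := by
  have key : ∀ u : Fin M → ℝ, (G *ᵥ e) ⬝ᵥ (B *ᵥ u) = e ⬝ᵥ u := by
    intro u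
    rw [← Matrix.vecMul_transpose, ← Matrix.dotProduct_mulVec, Matrix.mulVec_mulVec, h,
      Matrix.one_mulVec]
  calc ∑ j, ∑ k, ∑ l, (-(c * ((G *ᵥ e) k * x j)) * B k l) * Q l j
      = ∑ j, -(c * (x j * ((G *ᵥ e) ⬝ᵥ (B *ᵥ fun l => Q l j)))) := by
        refine Finset.sum_congr rfl fun j _ => ?_
        simp only [dotProduct, Matrix.mulVec, Finset.mul_sum, mul_neg, neg_mul,
          Finset.sum_neg_distrib]
        exact congrArg Neg.neg (Finset.sum_congr rfl fun k _ =>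
          Finset.sum_congr rfl fun l _ => by ring)
    _ = -(c * (e ⬝ᵥ (Q *ᵥ x))) := by
        simp only [key]
        simp only [dotProduct, Matrix.mulVec, Finset.mul_sum, mul_neg,
          Finset.sum_neg_distrib]
        rw [Finset.sum_comm]
        exact congrArg Neg.neg (Finset.sum_congr rfl fun a _ =>
          Finset.sum_congr rfl fun b _ => by ring)

lemma swap_sym {ι : Type*} [Fintype ι] {n : Type*} [Fintype n] (B : Matrix n n ℝ)
    (hB : Bᵀ = B) (f g : ι → n → ℝ) :
    ∑ j, ∑ k, ∑ l, (f j k * B k l) * g j l = ∑ j, ∑ k, ∑ l, (g j k * B k l) * f j l := by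
  refine Finset.sum_congr rfl fun j _ => ?_
  rw [Finset.sum_comm]
  refine Finset.sum_congr rfl fun k _ => Finset.sum_congr rfl fun l _ => ?_
  have h : B l k = B k l := by
    conv_lhs => rw [← hB]
    exact Matrix.transpose_apply ..
  rw [h]; ring

lemma quad_eq {n : Type*} [Fintype n] (A : Matrix n n ℝ) (v : n → ℝ) :
    ∑ j, ∑ k, (v j * A j k) * v k = v ⬝ᵥ A *ᵥ v := by
  simp only [dotProduct, Matrix.mulVec, Finset.mul_sum]
  exact Finset.sum_congr rfl fun j _ => Finset.sum_congr rfl fun k _ => by ring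

lemma dot_add_self_le {n : Type*} [Fintype n] (u v : n → ℝ) :
    (u + v) ⬝ᵥ (u + v) ≤ 2 * (u ⬝ᵥ u) + 2 * (v ⬝ᵥ v) := by
  have h := dot_self_nonneg (u - v)
  simp only [sub_dotProduct, dotProduct_sub, add_dotProduct, dotProduct_add] at *
  linarith

lemma sum_rank_one_sq {ι κ : Type*} [Fintype ι] [Fintype κ] (a : ι → ℝ) (b : κ → ℝ) (c : ℝ) :
    ∑ i, ∑ j, (-(c * (b j * a i)))^2 = c^2 * (b ⬝ᵥ b) * (a ⬝ᵥ a) := by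
  simp only [dotProduct]
  rw [Finset.sum_comm, mul_assoc, Finset.sum_mul_sum, Finset.mul_sum]
  refine Finset.sum_congr rfl fun j _ => ?_
  rw [Finset.mul_sum]
  exact Finset.sum_congr rfl fun i _ => by ring

end helpers
lemma sum_sq_add_le {ι κ : Type*} [Fintype ι] [Fintype κ] (a b : ι → κ → ℝ) :
    ∑ i, ∑ j, (a i j + b i j)^2
      ≤ 2 * (∑ i, ∑ j, (a i j)^2) + 2 * (∑ i, ∑ j, (b i j)^2) := by
  have h : ∀ i, ∑ j, (a i j + b i j)^2 ≤ ∑ j, (2 * (a i j)^2 + 2 * (b i j)^2) :=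
    fun i => Finset.sum_le_sum fun j _ => by nlinarith [sq_nonneg (a i j - b i j)]
  calc ∑ i, ∑ j, (a i j + b i j)^2 ≤ ∑ i, ∑ j, (2 * (a i j)^2 + 2 * (b i j)^2) :=
        Finset.sum_le_sum fun i _ => h i
    _ = 2 * (∑ i, ∑ j, (a i j)^2) + 2 * (∑ i, ∑ j, (b i j)^2) := by
        simp [Finset.sum_add_distrib, Finset.mul_sum]


set_option maxHeartbeats 2000000 in
/-- MIMO continuous-time adaptive laws (Lemma 3.1, continuous-time case):
`Θ, Ψ ∈ L^∞`, `ε/m ∈ L² ∩ L^∞` and `dΘ/dt, dΨ/dt ∈ L² ∩ L^∞` on `[0, ∞)`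
(Frobenius norms). -/
theorem mimo_continuous_adaptive_law_properties
    (N M : ℕ) (hN : 0 < N) (hM : 0 < M)
    (ζ : ℝ → Fin N → ℝ) (ξ : ℝ → Fin M → ℝ)
    (hζc : ∀ i, Continuous fun t => ζ t i)
    (hξc : ∀ j, Continuous fun t => ξ t j)
    (m : ℝ → ℝ)
    (hm : ∀ t, m t = Real.sqrt (1 + (∑ i, ζ t i * ζ t i) + ∑ j, ξ t j * ξ t j))
    (Kp Sp : Matrix (Fin M) (Fin M) ℝ) (hSp : IsUnit Sp.det)
    (hKS : (Kp * Sp).PosDef)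
    (Γ : Matrix (Fin M) (Fin M) ℝ) (hΓ : Γ.PosDef)
    (Θs : Matrix (Fin N) (Fin M) ℝ)
    (Θ Θ' : ℝ → Matrix (Fin N) (Fin M) ℝ) (Ψ Ψ' : ℝ → Matrix (Fin M) (Fin M) ℝ)
    (hΘd : ∀ t i j, HasDerivAt (fun s => Θ s i j) (Θ' t i j) t)
    (hΨd : ∀ t i j, HasDerivAt (fun s => Ψ s i j) (Ψ' t i j) t)
    (ε : ℝ → Fin M → ℝ)
    (hε : ∀ t, ε t = Kp.mulVec ((Θ t - Θs)ᵀ.mulVec (ζ t)) + (Ψ t - Kp).mulVec (ξ t))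
    (hΘlaw : ∀ t, 0 ≤ t →
      (Θ' t)ᵀ = -(m t ^ 2)⁻¹ • Matrix.vecMulVec (Sp.mulVec (ε t)) (ζ t))
    (hΨlaw : ∀ t, 0 ≤ t →
      Ψ' t = -(m t ^ 2)⁻¹ • Matrix.vecMulVec (Γ.mulVec (ε t)) (ξ t)) :
    (∃ C : ℝ, ∀ t, 0 ≤ t → Real.sqrt (∑ i, ∑ j, (Θ t i j) ^ 2) ≤ C) ∧
    (∃ C : ℝ, ∀ t, 0 ≤ t → Real.sqrt (∑ i, ∑ j, (Ψ t i j) ^ 2) ≤ C) ∧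
    IntegrableOn (fun t => (∑ j, ε t j * ε t j) / m t ^ 2) (Set.Ici (0 : ℝ)) ∧
    (∃ C : ℝ, ∀ t, 0 ≤ t → Real.sqrt (∑ j, ε t j * ε t j) / m t ≤ C) ∧
    (∃ C : ℝ, ∀ t, 0 ≤ t → Real.sqrt (∑ i, ∑ j, (Θ' t i j) ^ 2) ≤ C) ∧
    (∃ C : ℝ, ∀ t, 0 ≤ t → Real.sqrt (∑ i, ∑ j, (Ψ' t i j) ^ 2) ≤ C) ∧
    IntegrableOn (fun t => ∑ i, ∑ j, (Θ' t i j) ^ 2) (Set.Ici (0 : ℝ)) ∧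
    IntegrableOn (fun t => ∑ i, ∑ j, (Ψ' t i j) ^ 2) (Set.Ici (0 : ℝ)) := by
  classical
  haveI : Nonempty (Fin M) := ⟨⟨0, hM⟩⟩
  -- basic facts about m
  have hzz : ∀ t, 0 ≤ ∑ i, ζ t i * ζ t i := fun t =>
    Finset.sum_nonneg fun _ _ => mul_self_nonneg _
  have hxx : ∀ t, 0 ≤ ∑ j, ξ t j * ξ t j := fun t =>
    Finset.sum_nonneg fun _ _ => mul_self_nonneg _
  have hmsq : ∀ t, m t ^ 2 = 1 + (∑ i, ζ t i * ζ t i) + ∑ j, ξ t j * ξ t j := by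
    intro t; rw [hm]; exact Real.sq_sqrt (by linarith [hzz t, hxx t])
  have hm1 : ∀ t, 1 ≤ m t := by
    intro t
    rw [hm]
    calc (1:ℝ) = Real.sqrt 1 := Real.sqrt_one.symm
      _ ≤ _ := Real.sqrt_le_sqrt (by linarith [hzz t, hxx t])
  have hmpos : ∀ t, 0 < m t := fun t => lt_of_lt_of_le one_pos (hm1 t)
  have hm2pos : ∀ t, 0 < m t ^ 2 := fun t => pow_pos (hmpos t) 2
  have hζm : ∀ t, ζ t ⬝ᵥ ζ t ≤ m t ^ 2 := by
    intro t
    rw [hmsq t]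
    have : ζ t ⬝ᵥ ζ t = ∑ i, ζ t i * ζ t i := rfl
    linarith [hxx t]
  have hξm : ∀ t, ξ t ⬝ᵥ ξ t ≤ m t ^ 2 := by
    intro t
    rw [hmsq t]
    have : ξ t ⬝ᵥ ξ t = ∑ j, ξ t j * ξ t j := rfl
    linarith [hzz t]
  -- matrix constants
  have hdetST : IsUnit (Spᵀ).det := by rwa [Matrix.det_transpose]
  set A : Matrix (Fin M) (Fin M) ℝ := (Spᵀ)⁻¹ * Kp with hAdef
  have hSpTA : Spᵀ * A = Kp := by
    rw [hAdef, ← Matrix.mul_assoc, Matrix.mul_nonsing_inv _ hdetST, Matrix.one_mul]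
  have hKSsymm : (Kp * Sp)ᵀ = Kp * Sp := posdef_symm hKS
  have hST : Spᵀ * Kpᵀ = Kp * Sp := by rw [← Matrix.transpose_mul]; exact hKSsymm
  have hAsymm : Aᵀ = A := by
    rw [hAdef, Matrix.transpose_mul, Matrix.transpose_nonsing_inv, Matrix.transpose_transpose]
    have h1 : Kpᵀ = (Spᵀ)⁻¹ * (Kp * Sp) := by
      rw [← hST, ← Matrix.mul_assoc, Matrix.nonsing_inv_mul _ hdetST, Matrix.one_mul]
    rw [h1, Matrix.mul_assoc ((Spᵀ)⁻¹), Matrix.mul_assoc Kp, Matrix.mul_nonsing_inv _ hSp,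
      Matrix.mul_one]
  have hSpinv : ∀ v : Fin M → ℝ, Sp *ᵥ (Sp⁻¹ *ᵥ v) = v := by
    intro v
    rw [Matrix.mulVec_mulVec, Matrix.mul_nonsing_inv _ hSp, Matrix.one_mulVec]
  have hApos : A.PosDef := by
    refine Matrix.PosDef.of_dotProduct_mulVec_pos ?_ ?_
    · show Aᴴ = A
      rw [Matrix.conjTranspose_eq_transpose_of_trivial, hAsymm]
    · intro v hv
      have hne : Sp⁻¹ *ᵥ v ≠ 0 := by
        intro h0
        exact hv (by rw [← hSpinv v, h0, Matrix.mulVec_zero])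
      have hkey : v ⬝ᵥ A *ᵥ v = (Sp⁻¹ *ᵥ v) ⬝ᵥ ((Kp * Sp) *ᵥ (Sp⁻¹ *ᵥ v)) := by
        calc v ⬝ᵥ A *ᵥ v = v ⬝ᵥ (Spᵀ)⁻¹ *ᵥ (Kp *ᵥ v) := by rw [hAdef, ← Matrix.mulVec_mulVec]
          _ = (Sp⁻¹ *ᵥ v) ⬝ᵥ (Kp *ᵥ v) := by
              rw [Matrix.dotProduct_mulVec v ((Spᵀ)⁻¹), ← Matrix.transpose_nonsing_inv,
                Matrix.vecMul_transpose]
          _ = (Sp⁻¹ *ᵥ v) ⬝ᵥ ((Kp * Sp) *ᵥ (Sp⁻¹ *ᵥ v)) := by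
              rw [← Matrix.mulVec_mulVec, hSpinv]
      have hpos := posdef_dot_pos hKS hne
      simpa [hkey] using hpos
  obtain ⟨cA, hcA, hcAle⟩ := posdef_coercive hApos
  have hGsymm : Γᵀ = Γ := posdef_symm hΓ
  set B : Matrix (Fin M) (Fin M) ℝ := Γ⁻¹ with hBdef
  have hBpos : B.PosDef := hΓ.inv
  have hBsymm : Bᵀ = B := posdef_symm hBpos
  have hGB : Γᵀ * B = 1 := by
    rw [hGsymm, hBdef]
    exact Matrix.mul_nonsing_inv _ (isUnit_iff_ne_zero.mpr hΓ.det_pos.ne')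
  obtain ⟨cB, hcB, hcBle⟩ := posdef_coercive hBpos
  -- P and Q
  set P : ℝ → Matrix (Fin N) (Fin M) ℝ := fun t => Θ t - Θs with hPdef
  set Q : ℝ → Matrix (Fin M) (Fin M) ℝ := fun t => Ψ t - Kp with hQdef
  have hε' : ∀ t, ε t = Kp *ᵥ ((P t)ᵀ *ᵥ ζ t) + Q t *ᵥ ξ t := by
    intro t; simp only [hPdef, hQdef]; exact hε t
  have hPd : ∀ t i j, HasDerivAt (fun s => P s i j) (Θ' t i j) t := by
    intro t i j
    simp only [hPdef, Matrix.sub_apply]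
    exact (hΘd t i j).sub_const (Θs i j)
  have hQd : ∀ t i j, HasDerivAt (fun s => Q s i j) (Ψ' t i j) t := by
    intro t i j
    simp only [hQdef, Matrix.sub_apply]
    exact (hΨd t i j).sub_const (Kp i j)
  have hΘc : ∀ i j, Continuous fun t => Θ t i j := fun i j =>
    continuous_iff_continuousAt.mpr fun t => (hΘd t i j).continuousAt
  have hΨc : ∀ i j, Continuous fun t => Ψ t i j := fun i j =>
    continuous_iff_continuousAt.mpr fun t => (hΨd t i j).continuousAt
  have hεc : ∀ j, Continuous fun t => ε t j := by
    intro j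
    have hrw : (fun t => ε t j)
        = fun t => (∑ k, Kp j k * (∑ i, (Θ t i k - Θs i k) * ζ t i))
            + ∑ k, (Ψ t j k - Kp j k) * ξ t k := by
      funext t
      rw [hε]
      simp only [Matrix.mulVec, dotProduct, Pi.add_apply, Matrix.transpose_apply,
        Matrix.sub_apply]
    rw [hrw]
    apply Continuous.add
    · exact continuous_finset_sum _ fun k _ => continuous_const.mul
        (continuous_finset_sum _ fun i _ => ((hΘc i k).sub continuous_const).mul (hζc i))
    · exact continuous_finset_sum _ fun k _ => ((hΨc j k).sub continuous_const).mul (hξc k)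
  -- entry-wise adaptive laws
  have hΘ'e : ∀ t, 0 ≤ t → ∀ i j, Θ' t i j = -((m t ^ 2)⁻¹ * ((Sp *ᵥ ε t) j * ζ t i)) := by
    intro t ht i j
    have h := congrFun (congrFun (hΘlaw t ht) j) i
    simpa [Matrix.transpose_apply, Matrix.vecMulVec_apply, smul_eq_mul, neg_mul] using h
  have hΨ'e : ∀ t, 0 ≤ t → ∀ k j, Ψ' t k j = -((m t ^ 2)⁻¹ * ((Γ *ᵥ ε t) k * ξ t j)) := by
    intro t ht k j
    have h := congrFun (congrFun (hΨlaw t ht) k) j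
    simpa [Matrix.vecMulVec_apply, smul_eq_mul, neg_mul] using h
  -- the Lyapunov function and its derivative
  set V : ℝ → ℝ := fun t =>
    (∑ i, ∑ j, ∑ k, (P t i j * A j k) * P t i k)
      + ∑ j, ∑ k, ∑ l, (Q t k j * B k l) * Q t l j with hVdef
  set DV : ℝ → ℝ := fun t =>
    (∑ i, ∑ j, ∑ k, ((Θ' t i j * A j k) * P t i k + (P t i j * A j k) * Θ' t i k))
      + ∑ j, ∑ k, ∑ l, ((Ψ' t k j * B k l) * Q t l j + (Q t k j * B k l) * Ψ' t l j)
    with hDVdef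
  have hVd : ∀ t, HasDerivAt V (DV t) t := by
    intro t
    simp only [hVdef, hDVdef]
    apply HasDerivAt.add
    · apply HasDerivAt.fun_sum; intro i _
      apply HasDerivAt.fun_sum; intro j _
      apply HasDerivAt.fun_sum; intro k _
      exact ((hPd t i j).mul_const (A j k)).mul (hPd t i k)
    · apply HasDerivAt.fun_sum; intro j _
      apply HasDerivAt.fun_sum; intro k _
      apply HasDerivAt.fun_sum; intro l _
      exact ((hQd t k j).mul_const (B k l)).mul (hQd t l j)
  have hDVeq : ∀ t, 0 ≤ t → DV t = -(2 * ((ε t ⬝ᵥ ε t) / m t ^ 2)) := by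
    intro t ht
    have e1 : ∑ i, ∑ j, ∑ k, (Θ' t i j * A j k) * P t i k
        = -((m t ^ 2)⁻¹ * (ε t ⬝ᵥ (Kp *ᵥ ((P t)ᵀ *ᵥ ζ t)))) := by
      rw [← tripleA Sp A Kp hSpTA (P t) (ζ t) (ε t) ((m t ^ 2)⁻¹)]
      exact Finset.sum_congr rfl fun i _ => Finset.sum_congr rfl fun j _ =>
        Finset.sum_congr rfl fun k _ => by rw [hΘ'e t ht i j]
    have e2 : ∑ i, ∑ j, ∑ k, (P t i j * A j k) * Θ' t i k
        = -((m t ^ 2)⁻¹ * (ε t ⬝ᵥ (Kp *ᵥ ((P t)ᵀ *ᵥ ζ t)))) := by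
      have h := swap_sym A hAsymm (fun i j => P t i j) (fun i j => Θ' t i j)
      exact h.trans e1
    have f1 : ∑ j, ∑ k, ∑ l, (Ψ' t k j * B k l) * Q t l j
        = -((m t ^ 2)⁻¹ * (ε t ⬝ᵥ (Q t *ᵥ ξ t))) := by
      rw [← tripleB Γ B hGB (Q t) (ξ t) (ε t) ((m t ^ 2)⁻¹)]
      exact Finset.sum_congr rfl fun j _ => Finset.sum_congr rfl fun k _ =>
        Finset.sum_congr rfl fun l _ => by rw [hΨ'e t ht k j]
    have f2 : ∑ j, ∑ k, ∑ l, (Q t k j * B k l) * Ψ' t l j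
        = -((m t ^ 2)⁻¹ * (ε t ⬝ᵥ (Q t *ᵥ ξ t))) := by
      have h := swap_sym B hBsymm (fun j k => Q t k j) (fun j l => Ψ' t l j)
      exact h.trans f1
    have hεe : ε t ⬝ᵥ ε t
        = ε t ⬝ᵥ (Kp *ᵥ ((P t)ᵀ *ᵥ ζ t)) + ε t ⬝ᵥ (Q t *ᵥ ξ t) := by
      rw [hε' t]
      simp only [dotProduct_add, add_dotProduct]
    simp only [hDVdef]
    simp only [Finset.sum_add_distrib]
    rw [e1, e2, f1, f2, hεe, div_eq_mul_inv]
    ring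
  -- V is nonincreasing and nonnegative
  have hVcont : Continuous V := continuous_iff_continuousAt.mpr fun t =>
    (hVd t).continuousAt
  have hDVnonpos : ∀ t, 0 ≤ t → DV t ≤ 0 := by
    intro t ht
    rw [hDVeq t ht]
    have h1 : 0 ≤ (ε t ⬝ᵥ ε t) / m t ^ 2 := div_nonneg (dot_self_nonneg _) (hm2pos t).le
    linarith
  have hVanti : AntitoneOn V (Set.Ici (0:ℝ)) := by
    apply antitoneOn_of_deriv_nonpos (convex_Ici 0) hVcont.continuousOn
    · intro x _
      exact (hVd x).differentiableAt.differentiableWithinAt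
    · intro x hx
      rw [interior_Ici] at hx
      rw [(hVd x).deriv]
      exact hDVnonpos x (le_of_lt hx)
  have hVle : ∀ t, 0 ≤ t → V t ≤ V 0 := fun t ht => hVanti Set.self_mem_Ici ht ht
  have hV1 : ∀ t, ∑ i, ∑ j, ∑ k, (P t i j * A j k) * P t i k
      = ∑ i, (fun j => P t i j) ⬝ᵥ A *ᵥ (fun j => P t i j) :=
    fun t => Finset.sum_congr rfl fun i _ => quad_eq A _
  have hV2 : ∀ t, ∑ j, ∑ k, ∑ l, (Q t k j * B k l) * Q t l j
      = ∑ j, (fun k => Q t k j) ⬝ᵥ B *ᵥ (fun k => Q t k j) :=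
    fun t => Finset.sum_congr rfl fun j _ => quad_eq B _
  have hVQnn : ∀ t, 0 ≤ ∑ j, ∑ k, ∑ l, (Q t k j * B k l) * Q t l j := by
    intro t
    rw [hV2 t]
    exact Finset.sum_nonneg fun j _ => posdef_dot_nonneg hBpos _
  have hVPnn : ∀ t, 0 ≤ ∑ i, ∑ j, ∑ k, (P t i j * A j k) * P t i k := by
    intro t
    rw [hV1 t]
    exact Finset.sum_nonneg fun i _ => posdef_dot_nonneg hApos _
  have hVnonneg : ∀ t, 0 ≤ V t := by
    intro t
    simp only [hVdef]
    exact add_nonneg (hVPnn t) (hVQnn t)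
  -- bounds on the parameter errors
  have hPsum : ∀ t, 0 ≤ t → ∑ i, ∑ j, (P t i j)^2 ≤ V 0 / cA := by
    intro t ht
    have hrow : ∀ i, cA * (∑ j, (P t i j)^2)
        ≤ (fun j => P t i j) ⬝ᵥ A *ᵥ (fun j => P t i j) := by
      intro i
      have h := hcAle (fun j => P t i j)
      have h2 : (fun j => P t i j) ⬝ᵥ (fun j => P t i j) = ∑ j, (P t i j)^2 := by
        simp [dotProduct, pow_two]
      rw [h2] at h
      exact h
    have h1 : cA * (∑ i, ∑ j, (P t i j)^2) ≤ V t := by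
      calc cA * ∑ i, ∑ j, (P t i j)^2 = ∑ i, cA * ∑ j, (P t i j)^2 := Finset.mul_sum ..
        _ ≤ ∑ i, (fun j => P t i j) ⬝ᵥ A *ᵥ (fun j => P t i j) :=
            Finset.sum_le_sum fun i _ => hrow i
        _ ≤ V t := by
            simp only [hVdef]
            rw [hV1 t]
            linarith [hVQnn t]
    have h2 := hVle t ht
    rw [le_div_iff₀ hcA]
    calc (∑ i, ∑ j, (P t i j)^2) * cA = cA * ∑ i, ∑ j, (P t i j)^2 := mul_comm _ _
      _ ≤ V 0 := le_trans h1 h2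
  have hQsum : ∀ t, 0 ≤ t → ∑ k, ∑ j, (Q t k j)^2 ≤ V 0 / cB := by
    intro t ht
    have hcol : ∀ j, cB * (∑ k, (Q t k j)^2)
        ≤ (fun k => Q t k j) ⬝ᵥ B *ᵥ (fun k => Q t k j) := by
      intro j
      have h := hcBle (fun k => Q t k j)
      have h2 : (fun k => Q t k j) ⬝ᵥ (fun k => Q t k j) = ∑ k, (Q t k j)^2 := by
        simp [dotProduct, pow_two]
      rw [h2] at h
      exact h
    have h1 : cB * (∑ j, ∑ k, (Q t k j)^2) ≤ V t := by
      calc cB * ∑ j, ∑ k, (Q t k j)^2 = ∑ j, cB * ∑ k, (Q t k j)^2 := Finset.mul_sum ..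
        _ ≤ ∑ j, (fun k => Q t k j) ⬝ᵥ B *ᵥ (fun k => Q t k j) :=
            Finset.sum_le_sum fun j _ => hcol j
        _ ≤ V t := by
            simp only [hVdef]
            rw [hV2 t]
            linarith [hVPnn t]
    have h2 := hVle t ht
    rw [le_div_iff₀ hcB, Finset.sum_comm]
    calc (∑ j, ∑ k, (Q t k j)^2) * cB = cB * ∑ j, ∑ k, (Q t k j)^2 := mul_comm _ _
      _ ≤ V 0 := le_trans h1 h2
  -- a uniform bound for ε⬝ε / m²
  set CP : ℝ := V 0 / cA with hCPdef
  set CQ : ℝ := V 0 / cB with hCQdef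
  have hCPnn : 0 ≤ CP := div_nonneg (hVnonneg 0) hcA.le
  have hCQnn : 0 ≤ CQ := div_nonneg (hVnonneg 0) hcB.le
  set FKp : ℝ := ∑ i, ∑ j, (Kp i j)^2 with hFKpdef
  have hFKpnn : 0 ≤ FKp :=
    Finset.sum_nonneg fun i _ => Finset.sum_nonneg fun j _ => sq_nonneg _
  set Ce : ℝ := 2 * (FKp * CP) + 2 * CQ with hCedef
  have hCenn : 0 ≤ Ce :=
    add_nonneg (mul_nonneg (by norm_num) (mul_nonneg hFKpnn hCPnn))
      (mul_nonneg (by norm_num) hCQnn)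
  have hee : ∀ t, 0 ≤ t → ε t ⬝ᵥ ε t ≤ Ce * m t ^ 2 := by
    intro t ht
    have h1 : ε t ⬝ᵥ ε t ≤ 2 * ((Kp *ᵥ ((P t)ᵀ *ᵥ ζ t)) ⬝ᵥ (Kp *ᵥ ((P t)ᵀ *ᵥ ζ t)))
        + 2 * ((Q t *ᵥ ξ t) ⬝ᵥ (Q t *ᵥ ξ t)) := by
      rw [hε' t]
      exact dot_add_self_le _ _
    have h2 : (Kp *ᵥ ((P t)ᵀ *ᵥ ζ t)) ⬝ᵥ (Kp *ᵥ ((P t)ᵀ *ᵥ ζ t))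
        ≤ FKp * (((P t)ᵀ *ᵥ ζ t) ⬝ᵥ ((P t)ᵀ *ᵥ ζ t)) := mulVec_dot_le _ _
    have h3 : ((P t)ᵀ *ᵥ ζ t) ⬝ᵥ ((P t)ᵀ *ᵥ ζ t)
        ≤ (∑ k, ∑ i, ((P t)ᵀ k i)^2) * (ζ t ⬝ᵥ ζ t) := mulVec_dot_le _ _
    have h3' : (∑ k, ∑ i, ((P t)ᵀ k i)^2) = ∑ i, ∑ j, (P t i j)^2 := by
      rw [Finset.sum_comm]
      exact Finset.sum_congr rfl fun i _ => Finset.sum_congr rfl fun k _ => rfl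
    have h4 : ((P t)ᵀ *ᵥ ζ t) ⬝ᵥ ((P t)ᵀ *ᵥ ζ t) ≤ CP * m t ^ 2 := by
      refine le_trans h3 ?_
      rw [h3']
      have := hPsum t ht
      have hzz' := dot_self_nonneg (ζ t)
      have hPnn : (0:ℝ) ≤ ∑ i, ∑ j, (P t i j)^2 :=
        Finset.sum_nonneg fun i _ => Finset.sum_nonneg fun j _ => sq_nonneg _
      exact mul_le_mul this (hζm t) hzz' hCPnn
    have h5 : (Q t *ᵥ ξ t) ⬝ᵥ (Q t *ᵥ ξ t) ≤ CQ * m t ^ 2 := by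
      refine le_trans (mulVec_dot_le _ _) ?_
      have := hQsum t ht
      have hQnn : (0:ℝ) ≤ ∑ k, ∑ j, (Q t k j)^2 :=
        Finset.sum_nonneg fun k _ => Finset.sum_nonneg fun j _ => sq_nonneg _
      exact mul_le_mul this (hξm t) (dot_self_nonneg _) hCQnn
    have h6 : (Kp *ᵥ ((P t)ᵀ *ᵥ ζ t)) ⬝ᵥ (Kp *ᵥ ((P t)ᵀ *ᵥ ζ t)) ≤ FKp * (CP * m t ^ 2) :=
      le_trans h2 (mul_le_mul_of_nonneg_left h4 hFKpnn)
    rw [hCedef]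
    nlinarith
  -- conclusion 4 : sup of ε/m
  have hc4 : ∀ t, 0 ≤ t → Real.sqrt (∑ j, ε t j * ε t j) / m t ≤ Real.sqrt Ce := by
    intro t ht
    rw [div_le_iff₀ (hmpos t)]
    have h0 : (∑ j, ε t j * ε t j) = ε t ⬝ᵥ ε t := rfl
    calc Real.sqrt (∑ j, ε t j * ε t j) ≤ Real.sqrt (Ce * m t ^ 2) := by
          rw [h0]; exact Real.sqrt_le_sqrt (hee t ht)
      _ = Real.sqrt Ce * m t := by
          rw [Real.sqrt_mul hCenn, Real.sqrt_sq (hmpos t).le]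
  -- conclusion 1 : sup of Θ
  have hc1 : ∀ t, 0 ≤ t →
      Real.sqrt (∑ i, ∑ j, (Θ t i j)^2)
        ≤ Real.sqrt (2 * CP + 2 * (∑ i, ∑ j, (Θs i j)^2)) := by
    intro t ht
    apply Real.sqrt_le_sqrt
    have hde : ∀ i j, Θ t i j = P t i j + Θs i j := by
      intro i j
      simp [hPdef, Matrix.sub_apply]
    calc ∑ i, ∑ j, (Θ t i j)^2 = ∑ i, ∑ j, (P t i j + Θs i j)^2 := by
          exact Finset.sum_congr rfl fun i _ => Finset.sum_congr rfl fun j _ => by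
            rw [hde i j]
      _ ≤ 2 * (∑ i, ∑ j, (P t i j)^2) + 2 * (∑ i, ∑ j, (Θs i j)^2) :=
          sum_sq_add_le _ _
      _ ≤ 2 * CP + 2 * (∑ i, ∑ j, (Θs i j)^2) := by linarith [hPsum t ht]
  -- conclusion 2 : sup of Ψ
  have hc2 : ∀ t, 0 ≤ t →
      Real.sqrt (∑ i, ∑ j, (Ψ t i j)^2)
        ≤ Real.sqrt (2 * CQ + 2 * (∑ i, ∑ j, (Kp i j)^2)) := by
    intro t ht
    apply Real.sqrt_le_sqrt
    have hde : ∀ i j, Ψ t i j = Q t i j + Kp i j := by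
      intro i j
      simp [hQdef, Matrix.sub_apply]
    calc ∑ i, ∑ j, (Ψ t i j)^2 = ∑ i, ∑ j, (Q t i j + Kp i j)^2 := by
          exact Finset.sum_congr rfl fun i _ => Finset.sum_congr rfl fun j _ => by
            rw [hde i j]
      _ ≤ 2 * (∑ i, ∑ j, (Q t i j)^2) + 2 * (∑ i, ∑ j, (Kp i j)^2) :=
          sum_sq_add_le _ _
      _ ≤ 2 * CQ + 2 * (∑ i, ∑ j, (Kp i j)^2) := by linarith [hQsum t ht]
  -- continuity of the normalized error
  have hm2c : Continuous fun t => m t ^ 2 := by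
    have hrw : (fun t => m t ^ 2)
        = fun t => 1 + (∑ i, ζ t i * ζ t i) + ∑ j, ξ t j * ξ t j := funext hmsq
    rw [hrw]
    exact (continuous_const.add (continuous_finset_sum _ fun i _ =>
      (hζc i).mul (hζc i))).add (continuous_finset_sum _ fun j _ => (hξc j).mul (hξc j))
  have hfc : Continuous (fun t => (∑ j, ε t j * ε t j) / m t ^ 2) :=
    (continuous_finset_sum _ fun j _ => (hεc j).mul (hεc j)).div hm2c
      fun t => (hm2pos t).ne'
  have hfnn : ∀ t, 0 ≤ (∑ j, ε t j * ε t j) / m t ^ 2 := fun t =>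
    div_nonneg (dot_self_nonneg (ε t)) (hm2pos t).le
  -- fundamental theorem of calculus
  have hFTC : ∀ b, 0 ≤ b →
      (∫ s in (0:ℝ)..b, (-(2 * ((∑ j, ε s j * ε s j) / m s ^ 2)))) = V b - V 0 := by
    intro b hb
    apply intervalIntegral.integral_eq_sub_of_hasDerivAt
    · intro x hx
      rw [Set.uIcc_of_le hb] at hx
      have hx0 : 0 ≤ x := hx.1
      have heq : -(2 * ((∑ j, ε x j * ε x j) / m x ^ 2)) = DV x := by
        rw [hDVeq x hx0]
        rfl
      exact heq ▸ hVd x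

    · exact (continuous_const.mul hfc).neg.intervalIntegrable 0 b
  have hIbound : ∀ b, 0 ≤ b →
      (∫ s in (0:ℝ)..b, ‖(∑ j, ε s j * ε s j) / m s ^ 2‖) ≤ V 0 / 2 := by
    intro b hb
    have h1 : (∫ s in (0:ℝ)..b, ‖(∑ j, ε s j * ε s j) / m s ^ 2‖)
        = ∫ s in (0:ℝ)..b, (∑ j, ε s j * ε s j) / m s ^ 2 :=
      intervalIntegral.integral_congr fun x _ => Real.norm_of_nonneg (hfnn x)
    have h2 := hFTC b hb
    have h3 : (∫ s in (0:ℝ)..b, (-(2 * ((∑ j, ε s j * ε s j) / m s ^ 2))))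
        = (-2) * ∫ s in (0:ℝ)..b, (∑ j, ε s j * ε s j) / m s ^ 2 := by
      rw [← intervalIntegral.integral_const_mul]
      exact intervalIntegral.integral_congr fun x _ => by ring
    have h4 : 0 ≤ V b := hVnonneg b
    rw [h1]
    rw [h3] at h2
    generalize hg0 : V 0 = v0 at h2 ⊢
    generalize hg1 : V b = vb at h2 h4
    linarith [h2, h4]
  have hc3 : IntegrableOn (fun t => (∑ j, ε t j * ε t j) / m t ^ 2) (Set.Ici (0:ℝ)) := by
    rw [integrableOn_Ici_iff_integrableOn_Ioi]
    apply integrableOn_Ioi_of_intervalIntegral_norm_bounded (V 0 / 2) (0:ℝ)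
      (fun b : ℝ => (hfc.integrableOn_Icc).mono_set Set.Ioc_subset_Icc_self)
      (Filter.tendsto_id (α := ℝ))
    filter_upwards [Filter.eventually_ge_atTop (0:ℝ)] with b hb using hIbound b hb
  -- derivative bounds
  set FSp : ℝ := ∑ i, ∑ j, (Sp i j)^2 with hFSpdef
  have hFSpnn : 0 ≤ FSp :=
    Finset.sum_nonneg fun i _ => Finset.sum_nonneg fun j _ => sq_nonneg _
  set FG : ℝ := ∑ i, ∑ j, (Γ i j)^2 with hFGdef
  have hFGnn : 0 ≤ FG :=
    Finset.sum_nonneg fun i _ => Finset.sum_nonneg fun j _ => sq_nonneg _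
  have hΘ'sum : ∀ t, 0 ≤ t → ∑ i, ∑ j, (Θ' t i j)^2
      = ((m t ^ 2)⁻¹)^2 * ((Sp *ᵥ ε t) ⬝ᵥ (Sp *ᵥ ε t)) * (ζ t ⬝ᵥ ζ t) := by
    intro t ht
    rw [← sum_rank_one_sq (ζ t) (Sp *ᵥ ε t) ((m t ^ 2)⁻¹)]
    exact Finset.sum_congr rfl fun i _ => Finset.sum_congr rfl fun j _ => by
      rw [hΘ'e t ht i j]
  have hΨ'sum : ∀ t, 0 ≤ t → ∑ i, ∑ j, (Ψ' t i j)^2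
      = ((m t ^ 2)⁻¹)^2 * (ξ t ⬝ᵥ ξ t) * ((Γ *ᵥ ε t) ⬝ᵥ (Γ *ᵥ ε t)) := by
    intro t ht
    rw [← sum_rank_one_sq (Γ *ᵥ ε t) (ξ t) ((m t ^ 2)⁻¹)]
    exact Finset.sum_congr rfl fun i _ => Finset.sum_congr rfl fun j _ => by
      rw [hΨ'e t ht i j]; ring
  have hΘ'le : ∀ t, 0 ≤ t →
      ∑ i, ∑ j, (Θ' t i j)^2 ≤ FSp * ((∑ j, ε t j * ε t j) / m t ^ 2) := by
    intro t ht
    rw [hΘ'sum t ht]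
    have h1 : (Sp *ᵥ ε t) ⬝ᵥ (Sp *ᵥ ε t) ≤ FSp * (ε t ⬝ᵥ ε t) := mulVec_dot_le _ _
    have hne := (hm2pos t).ne'
    have heq : ((m t ^ 2)⁻¹)^2 * (FSp * (ε t ⬝ᵥ ε t)) * (m t ^ 2)
        = FSp * ((ε t ⬝ᵥ ε t) / m t ^ 2) := by
      field_simp
    calc ((m t ^ 2)⁻¹)^2 * ((Sp *ᵥ ε t) ⬝ᵥ (Sp *ᵥ ε t)) * (ζ t ⬝ᵥ ζ t)
        ≤ ((m t ^ 2)⁻¹)^2 * (FSp * (ε t ⬝ᵥ ε t)) * (m t ^ 2) := by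
          apply mul_le_mul (mul_le_mul_of_nonneg_left h1 (sq_nonneg _)) (hζm t)
            (dot_self_nonneg _)
          exact mul_nonneg (sq_nonneg _) (mul_nonneg hFSpnn (dot_self_nonneg _))
      _ = FSp * ((ε t ⬝ᵥ ε t) / m t ^ 2) := heq
      _ = FSp * ((∑ j, ε t j * ε t j) / m t ^ 2) := rfl
  have hΨ'le : ∀ t, 0 ≤ t →
      ∑ i, ∑ j, (Ψ' t i j)^2 ≤ FG * ((∑ j, ε t j * ε t j) / m t ^ 2) := by
    intro t ht
    rw [hΨ'sum t ht]
    have h1 : (Γ *ᵥ ε t) ⬝ᵥ (Γ *ᵥ ε t) ≤ FG * (ε t ⬝ᵥ ε t) := mulVec_dot_le _ _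
    have hne := (hm2pos t).ne'
    have heq : ((m t ^ 2)⁻¹)^2 * (m t ^ 2) * (FG * (ε t ⬝ᵥ ε t))
        = FG * ((ε t ⬝ᵥ ε t) / m t ^ 2) := by
      field_simp
    calc ((m t ^ 2)⁻¹)^2 * (ξ t ⬝ᵥ ξ t) * ((Γ *ᵥ ε t) ⬝ᵥ (Γ *ᵥ ε t))
        ≤ ((m t ^ 2)⁻¹)^2 * (m t ^ 2) * (FG * (ε t ⬝ᵥ ε t)) := by
          apply mul_le_mul (mul_le_mul_of_nonneg_left (hξm t) (sq_nonneg _)) h1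
            (dot_self_nonneg _)
          exact mul_nonneg (sq_nonneg _) (hm2pos t).le
      _ = FG * ((ε t ⬝ᵥ ε t) / m t ^ 2) := heq
      _ = FG * ((∑ j, ε t j * ε t j) / m t ^ 2) := rfl
  have hfCe : ∀ t, 0 ≤ t → (∑ j, ε t j * ε t j) / m t ^ 2 ≤ Ce := by
    intro t ht
    rw [div_le_iff₀ (hm2pos t)]
    exact hee t ht
  have hc5 : ∀ t, 0 ≤ t →
      Real.sqrt (∑ i, ∑ j, (Θ' t i j)^2) ≤ Real.sqrt (FSp * Ce) := by
    intro t ht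
    apply Real.sqrt_le_sqrt
    calc ∑ i, ∑ j, (Θ' t i j)^2 ≤ FSp * ((∑ j, ε t j * ε t j) / m t ^ 2) := hΘ'le t ht
      _ ≤ FSp * Ce := mul_le_mul_of_nonneg_left (hfCe t ht) hFSpnn
  have hc6 : ∀ t, 0 ≤ t →
      Real.sqrt (∑ i, ∑ j, (Ψ' t i j)^2) ≤ Real.sqrt (FG * Ce) := by
    intro t ht
    apply Real.sqrt_le_sqrt
    calc ∑ i, ∑ j, (Ψ' t i j)^2 ≤ FG * ((∑ j, ε t j * ε t j) / m t ^ 2) := hΨ'le t ht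
      _ ≤ FG * Ce := mul_le_mul_of_nonneg_left (hfCe t ht) hFGnn
  -- integrability of the squared derivatives
  have hSpεc : ∀ k, Continuous fun t => (Sp *ᵥ ε t) k := by
    intro k
    simp only [Matrix.mulVec, dotProduct]
    exact continuous_finset_sum _ fun l _ => continuous_const.mul (hεc l)
  have hΓεc : ∀ k, Continuous fun t => (Γ *ᵥ ε t) k := by
    intro k
    simp only [Matrix.mulVec, dotProduct]
    exact continuous_finset_sum _ fun l _ => continuous_const.mul (hεc l)
  have hminvc : Continuous fun t => ((m t ^ 2)⁻¹)^2 :=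
    (hm2c.inv₀ fun t => (hm2pos t).ne').pow 2
  have hg1c : Continuous fun t =>
      ((m t ^ 2)⁻¹)^2 * ((Sp *ᵥ ε t) ⬝ᵥ (Sp *ᵥ ε t)) * (ζ t ⬝ᵥ ζ t) := by
    apply Continuous.mul
    · apply Continuous.mul hminvc
      have hrw : (fun t => (Sp *ᵥ ε t) ⬝ᵥ (Sp *ᵥ ε t))
          = fun t => ∑ k, (Sp *ᵥ ε t) k * (Sp *ᵥ ε t) k := rfl
      rw [hrw]
      exact continuous_finset_sum _ fun k _ => (hSpεc k).mul (hSpεc k)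
    · have hrw : (fun t => ζ t ⬝ᵥ ζ t) = fun t => ∑ i, ζ t i * ζ t i := rfl
      rw [hrw]
      exact continuous_finset_sum _ fun i _ => (hζc i).mul (hζc i)
  have hg2c : Continuous fun t =>
      ((m t ^ 2)⁻¹)^2 * (ξ t ⬝ᵥ ξ t) * ((Γ *ᵥ ε t) ⬝ᵥ (Γ *ᵥ ε t)) := by
    apply Continuous.mul
    · apply Continuous.mul hminvc
      have hrw : (fun t => ξ t ⬝ᵥ ξ t) = fun t => ∑ j, ξ t j * ξ t j := rfl
      rw [hrw]
      exact continuous_finset_sum _ fun j _ => (hξc j).mul (hξc j)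
    · have hrw : (fun t => (Γ *ᵥ ε t) ⬝ᵥ (Γ *ᵥ ε t))
          = fun t => ∑ k, (Γ *ᵥ ε t) k * (Γ *ᵥ ε t) k := rfl
      rw [hrw]
      exact continuous_finset_sum _ fun k _ => (hΓεc k).mul (hΓεc k)
  have hc7 : IntegrableOn (fun t => ∑ i, ∑ j, (Θ' t i j)^2) (Set.Ici (0:ℝ)) := by
    have hdom : IntegrableOn
        (fun t => FSp * ((∑ j, ε t j * ε t j) / m t ^ 2)) (Set.Ici (0:ℝ)) :=
      hc3.const_mul FSp
    apply Integrable.mono' hdom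
    · refine (hg1c.aestronglyMeasurable).congr ?_
      refine (ae_restrict_iff' measurableSet_Ici).mpr (Filter.Eventually.of_forall
        fun t ht => ?_)
      exact (hΘ'sum t ht).symm
    · refine (ae_restrict_iff' measurableSet_Ici).mpr (Filter.Eventually.of_forall
        fun t ht => ?_)
      rw [Real.norm_of_nonneg (show (0:ℝ) ≤ ∑ i, ∑ j, (Θ' t i j)^2 from Finset.sum_nonneg fun i _ =>
        Finset.sum_nonneg fun j _ => sq_nonneg _)]
      exact hΘ'le t ht
  have hc8 : IntegrableOn (fun t => ∑ i, ∑ j, (Ψ' t i j)^2) (Set.Ici (0:ℝ)) := by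
    have hdom : IntegrableOn
        (fun t => FG * ((∑ j, ε t j * ε t j) / m t ^ 2)) (Set.Ici (0:ℝ)) :=
      hc3.const_mul FG
    apply Integrable.mono' hdom
    · refine (hg2c.aestronglyMeasurable).congr ?_
      refine (ae_restrict_iff' measurableSet_Ici).mpr (Filter.Eventually.of_forall
        fun t ht => ?_)
      exact (hΨ'sum t ht).symm
    · refine (ae_restrict_iff' measurableSet_Ici).mpr (Filter.Eventually.of_forall
        fun t ht => ?_)
      rw [Real.norm_of_nonneg (show (0:ℝ) ≤ ∑ i, ∑ j, (Ψ' t i j)^2 from Finset.sum_nonneg fun i _ =>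
        Finset.sum_nonneg fun j _ => sq_nonneg _)]
      exact hΨ'le t ht
  exact ⟨⟨_, hc1⟩, ⟨_, hc2⟩, hc3, ⟨_, hc4⟩, ⟨_, hc5⟩, ⟨_, hc6⟩, hc7, hc8⟩
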